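/- Let G be a finite group with subgroups G₁, G₂, G₃, G₄. Suppose that for some pair of distinct indices i, j ∈ {1,2,3,4} with {i,j} ≠ {3,4}, the subgroups G_i and G_j are independent, i.e., |G_i|·|G_j| = |G|·|G_i ∩ G_j|. Then the Ingleton inequality holds: |G₁|·|G₂|·|G₃₄|·|G₁₂₃|·|G₁₂₄| ≥ |G₁₂|·|G₁₃|·|G₁₄|·|G₂₃|·|G₂₄|. -/

import Mathlib

open Subgroup

/-- For subgroups of a finite group, `|H|·|K| ≤ |G|·|H ⊓ K|`. -/
lemma card_mul_card_le (G : Type*) [Group G] [Finite G] (K L : Subgroup G) :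
    Nat.card K * Nat.card L ≤ Nat.card G * Nat.card (K ⊓ L : Subgroup G) := by
  have hrel : K.relIndex L ≤ K.index := by
    have h := Subgroup.relIndex_le_of_le_right (H := K) (K := L) le_top
      (by rw [Subgroup.relIndex_top_right]; exact K.index_ne_zero_of_finite)
    rwa [Subgroup.relIndex_top_right] at h
  have hcard : K.relIndex L * Nat.card (K ⊓ L : Subgroup G) = Nat.card L := by
    have h1 : Nat.card (K.subgroupOf L) = Nat.card (K ⊓ L : Subgroup G) := by
      rw [← Subgroup.inf_subgroupOf_right]
      exact Nat.card_congr (Subgroup.subgroupOfEquivOfLe inf_le_right).toEquiv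
    have h2 := Subgroup.index_mul_card (K.subgroupOf L)
    rw [h1] at h2
    exact h2
  calc Nat.card K * Nat.card L = Nat.card K * (K.relIndex L * Nat.card (K ⊓ L : Subgroup G)) := by
        rw [hcard]
    _ ≤ Nat.card K * (K.index * Nat.card (K ⊓ L : Subgroup G)) :=
        Nat.mul_le_mul_left _ (Nat.mul_le_mul_right _ hrel)
    _ = K.index * Nat.card K * Nat.card (K ⊓ L : Subgroup G) := by ring
    _ = Nat.card G * Nat.card (K ⊓ L : Subgroup G) := by rw [K.index_mul_card]

/-- `|B ⊓ A|·|C ⊓ A| ≤ |A|·|B ⊓ C ⊓ A|`. -/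
lemma inf_card_mul_inf_card_le (G : Type*) [Group G] [Finite G] (A B C : Subgroup G) :
    Nat.card (B ⊓ A : Subgroup G) * Nat.card (C ⊓ A : Subgroup G) ≤
      Nat.card A * Nat.card (B ⊓ C ⊓ A : Subgroup G) := by
  have key := card_mul_card_le A ((B ⊓ A).subgroupOf A) ((C ⊓ A).subgroupOf A)
  have e1 : Nat.card ((B ⊓ A).subgroupOf A) = Nat.card (B ⊓ A : Subgroup G) :=
    Nat.card_congr (Subgroup.subgroupOfEquivOfLe inf_le_right).toEquiv
  have e2 : Nat.card ((C ⊓ A).subgroupOf A) = Nat.card (C ⊓ A : Subgroup G) :=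
    Nat.card_congr (Subgroup.subgroupOfEquivOfLe inf_le_right).toEquiv
  have e3 : (B ⊓ A).subgroupOf A ⊓ (C ⊓ A).subgroupOf A = (B ⊓ C ⊓ A).subgroupOf A := by
    simp only [Subgroup.subgroupOf, ← Subgroup.comap_inf]
    congr 1
    rw [inf_assoc, inf_comm A (C ⊓ A), inf_assoc, inf_idem, inf_assoc]
  have e4 : Nat.card ((B ⊓ C ⊓ A).subgroupOf A) = Nat.card (B ⊓ C ⊓ A : Subgroup G) :=
    Nat.card_congr (Subgroup.subgroupOfEquivOfLe inf_le_right).toEquiv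
  rw [e1, e2, e3, e4] at key
  exact key

/-- Numerical core, pattern A: the independent pair is `(1,2)` (roles `a, a'`). -/
lemma ing_coreA {g a a' b b' t ab ab' a'b a'b' n34 u u' : ℕ}
    (hb : 0 < b) (hb' : 0 < b')
    (hi : a * a' = g * t) (e1 : ab * a'b ≤ b * u) (e2 : ab' * a'b' ≤ b' * u')
    (e3 : b * b' ≤ g * n34) :
    t * ab * ab' * a'b * a'b' ≤ a * a' * n34 * u * u' := by
  have key : (b * b') * (t * ab * ab' * a'b * a'b') ≤
      (b * b') * (a * a' * n34 * u * u') := by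
    calc (b * b') * (t * ab * ab' * a'b * a'b')
        = ((ab * a'b) * (ab' * a'b') * (b * b')) * t := by ring
      _ ≤ ((b * u) * (b' * u') * (g * n34)) * t :=
          Nat.mul_le_mul_right _ (Nat.mul_le_mul (Nat.mul_le_mul e1 e2) e3)
      _ = (b * b') * (n34 * u * u') * (g * t) := by ring
      _ = (b * b') * (n34 * u * u') * (a * a') := by rw [hi]
      _ = (b * b') * (a * a' * n34 * u * u') := by ring
  exact Nat.le_of_mul_le_mul_left key (Nat.mul_pos hb hb')

/-- Numerical core, pattern B: the independent pair is `(a, b)` with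
`a ∈ {1,2}`-role and `b ∈ {3,4}`-role. -/
lemma ing_coreB {g a a' b b' t ab ab' a'b a'b' n34 u u' : ℕ}
    (hg : 0 < g) (hb' : 0 < b')
    (hi : a * b = g * ab) (e1 : t * a'b ≤ a' * u) (e2 : ab' * a'b' ≤ b' * u')
    (e3 : b * b' ≤ g * n34) :
    t * ab * ab' * a'b * a'b' ≤ a * a' * n34 * u * u' := by
  have key : (g * b') * (t * ab * ab' * a'b * a'b') ≤
      (g * b') * (a * a' * n34 * u * u') := by
    calc (g * b') * (t * ab * ab' * a'b * a'b')
        = ((t * a'b) * (ab' * a'b')) * ((g * ab) * b') := by ring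
      _ = ((t * a'b) * (ab' * a'b')) * ((a * b) * b') := by rw [hi]
      _ ≤ ((a' * u) * (b' * u')) * ((a * b) * b') :=
          Nat.mul_le_mul_right _ (Nat.mul_le_mul e1 e2)
      _ = ((a' * u) * (b' * u') * a) * (b * b') := by ring
      _ ≤ ((a' * u) * (b' * u') * a) * (g * n34) := Nat.mul_le_mul_left _ e3
      _ = (g * b') * (a * a' * n34 * u * u') := by ring
  exact Nat.le_of_mul_le_mul_left key (Nat.mul_pos hg hb')

/-- If some pair of the four subgroups with distinct indices `i, j`,
`{i,j} ≠ {3,4}` (here `{2,3}` in 0-indexed notation), is independent, then the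
Ingleton inequality holds for `(H 0, H 1, H 2, H 3)`. -/
theorem stmt12 (G : Type*) [Group G] [Finite G] (H : Fin 4 → Subgroup G)
    (i j : Fin 4) (hij : i ≠ j) (hnot34 : ({i, j} : Finset (Fin 4)) ≠ {2, 3})
    (hindep : Nat.card (H i) * Nat.card (H j) = Nat.card G * Nat.card (H i ⊓ H j : Subgroup G)) :
    Nat.card (H 0) * Nat.card (H 1) * Nat.card (H 2 ⊓ H 3 : Subgroup G) *
        Nat.card (H 0 ⊓ H 1 ⊓ H 2 : Subgroup G) * Nat.card (H 0 ⊓ H 1 ⊓ H 3 : Subgroup G) ≥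
      Nat.card (H 0 ⊓ H 1 : Subgroup G) * Nat.card (H 0 ⊓ H 2 : Subgroup G) *
        Nat.card (H 0 ⊓ H 3 : Subgroup G) * Nat.card (H 1 ⊓ H 2 : Subgroup G) *
        Nat.card (H 1 ⊓ H 3 : Subgroup G) := by
  have hg : 0 < Nat.card G := Nat.card_pos
  have h2 : 0 < Nat.card (H 2) := Nat.card_pos
  have h3 : 0 < Nat.card (H 3) := Nat.card_pos
  have e3 : Nat.card (H 2) * Nat.card (H 3) ≤
      Nat.card G * Nat.card (H 2 ⊓ H 3 : Subgroup G) := card_mul_card_le G (H 2) (H 3)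
  have e3' : Nat.card (H 3) * Nat.card (H 2) ≤
      Nat.card G * Nat.card (H 2 ⊓ H 3 : Subgroup G) := by rw [Nat.mul_comm]; exact e3
  rcases (show i = 0 ∨ i = 1 ∨ i = 2 ∨ i = 3 by omega) with rfl | rfl | rfl | rfl <;>
    rcases (show j = 0 ∨ j = 1 ∨ j = 2 ∨ j = 3 by omega) with rfl | rfl | rfl | rfl
  · exact absurd rfl hij
  · -- (0,1)
    have e1 := inf_card_mul_inf_card_le G (H 2) (H 0) (H 1)
    have e2 := inf_card_mul_inf_card_le G (H 3) (H 0) (H 1)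
    have key := ing_coreA h2 h3 hindep e1 e2 e3
    linarith [key]
  · -- (0,2)
    have e1 := inf_card_mul_inf_card_le G (H 1) (H 0) (H 2)
    rw [inf_comm (H 2) (H 1), inf_right_comm (H 0) (H 2) (H 1)] at e1
    have e2 := inf_card_mul_inf_card_le G (H 3) (H 0) (H 1)
    have key := ing_coreB hg h3 hindep e1 e2 e3
    linarith [key]
  · -- (0,3)
    have e1 := inf_card_mul_inf_card_le G (H 1) (H 0) (H 3)
    rw [inf_comm (H 3) (H 1), inf_right_comm (H 0) (H 3) (H 1)] at e1
    have e2 := inf_card_mul_inf_card_le G (H 2) (H 0) (H 1)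
    have key := ing_coreB hg h2 hindep e1 e2 e3'
    linarith [key]
  · -- (1,0)
    have hi : Nat.card (H 0) * Nat.card (H 1) =
        Nat.card G * Nat.card (H 0 ⊓ H 1 : Subgroup G) := by
      rw [inf_comm (H 1) (H 0)] at hindep; linarith [hindep]
    have e1 := inf_card_mul_inf_card_le G (H 2) (H 0) (H 1)
    have e2 := inf_card_mul_inf_card_le G (H 3) (H 0) (H 1)
    have key := ing_coreA h2 h3 hi e1 e2 e3
    linarith [key]
  · exact absurd rfl hij
  · -- (1,2)
    have e1 := inf_card_mul_inf_card_le G (H 0) (H 1) (H 2)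
    rw [inf_comm (H 1) (H 0), inf_comm (H 2) (H 0),
      inf_comm (H 1 ⊓ H 2) (H 0), ← inf_assoc] at e1
    have e2 := inf_card_mul_inf_card_le G (H 3) (H 1) (H 0)
    rw [inf_comm (H 1) (H 0)] at e2
    have key := ing_coreB hg h3 hindep e1 e2 e3
    linarith [key]
  · -- (1,3)
    have e1 := inf_card_mul_inf_card_le G (H 0) (H 1) (H 3)
    rw [inf_comm (H 1) (H 0), inf_comm (H 3) (H 0),
      inf_comm (H 1 ⊓ H 3) (H 0), ← inf_assoc] at e1
    have e2 := inf_card_mul_inf_card_le G (H 2) (H 1) (H 0)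
    rw [inf_comm (H 1) (H 0)] at e2
    have key := ing_coreB hg h2 hindep e1 e2 e3'
    linarith [key]
  · -- (2,0)
    have hi : Nat.card (H 0) * Nat.card (H 2) =
        Nat.card G * Nat.card (H 0 ⊓ H 2 : Subgroup G) := by
      rw [inf_comm (H 2) (H 0)] at hindep; linarith [hindep]
    have e1 := inf_card_mul_inf_card_le G (H 1) (H 0) (H 2)
    rw [inf_comm (H 2) (H 1), inf_right_comm (H 0) (H 2) (H 1)] at e1
    have e2 := inf_card_mul_inf_card_le G (H 3) (H 0) (H 1)
    have key := ing_coreB hg h3 hi e1 e2 e3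
    linarith [key]
  · -- (2,1)
    have hi : Nat.card (H 1) * Nat.card (H 2) =
        Nat.card G * Nat.card (H 1 ⊓ H 2 : Subgroup G) := by
      rw [inf_comm (H 2) (H 1)] at hindep; linarith [hindep]
    have e1 := inf_card_mul_inf_card_le G (H 0) (H 1) (H 2)
    rw [inf_comm (H 1) (H 0), inf_comm (H 2) (H 0),
      inf_comm (H 1 ⊓ H 2) (H 0), ← inf_assoc] at e1
    have e2 := inf_card_mul_inf_card_le G (H 3) (H 1) (H 0)
    rw [inf_comm (H 1) (H 0)] at e2
    have key := ing_coreB hg h3 hi e1 e2 e3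
    linarith [key]
  · exact absurd rfl hij
  · exact absurd rfl hnot34
  · -- (3,0)
    have hi : Nat.card (H 0) * Nat.card (H 3) =
        Nat.card G * Nat.card (H 0 ⊓ H 3 : Subgroup G) := by
      rw [inf_comm (H 3) (H 0)] at hindep; linarith [hindep]
    have e1 := inf_card_mul_inf_card_le G (H 1) (H 0) (H 3)
    rw [inf_comm (H 3) (H 1), inf_right_comm (H 0) (H 3) (H 1)] at e1
    have e2 := inf_card_mul_inf_card_le G (H 2) (H 0) (H 1)
    have key := ing_coreB hg h2 hi e1 e2 e3'
    linarith [key]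
  · -- (3,1)
    have hi : Nat.card (H 1) * Nat.card (H 3) =
        Nat.card G * Nat.card (H 1 ⊓ H 3 : Subgroup G) := by
      rw [inf_comm (H 3) (H 1)] at hindep; linarith [hindep]
    have e1 := inf_card_mul_inf_card_le G (H 0) (H 1) (H 3)
    rw [inf_comm (H 1) (H 0), inf_comm (H 3) (H 0),
      inf_comm (H 1 ⊓ H 3) (H 0), ← inf_assoc] at e1
    have e2 := inf_card_mul_inf_card_le G (H 2) (H 1) (H 0)
    rw [inf_comm (H 1) (H 0)] at e2
    have key := ing_coreB hg h2 hi e1 e2 e3'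
    linarith [key]
  · exact absurd (by decide) hnot34
  · exact absurd rfl hij
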